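/- Define A(x,y,z) = (z−1)·log|z−1| − (z+1)·log|z+1| − 2xz. Then for all x, y ∈ ℝ and all z ∈ ℝ with z ≠ 1 and z ≠ −1, the Rashevsky identity A''(x,y,z)·(z²−1) + z·A'_y + A'_x − A_y = 0 holds; that is, the geodesic equation of the corresponding two-dimensional Finsler metric is y'' = y'² − 1, whose right-hand side is a polynomial of degree at most three in y'. -/

import Mathlib

noncomputable section

/-- Partial derivative in the third variable `z`. -/
def pZ (A : ℝ → ℝ → ℝ → ℝ) : ℝ → ℝ → ℝ → ℝ := fun x y z => deriv (fun t => A x y t) z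

/-- Partial derivative in the first variable `x`. -/
def pX (A : ℝ → ℝ → ℝ → ℝ) : ℝ → ℝ → ℝ → ℝ := fun x y z => deriv (fun t => A t y z) x

/-- Partial derivative in the second variable `y`. -/
def pY (A : ℝ → ℝ → ℝ → ℝ) : ℝ → ℝ → ℝ → ℝ := fun x y z => deriv (fun t => A x t z) y

/-- The associated fundamental function
`A(x,y,z) = (z−1)·log|z−1| − (z+1)·log|z+1| − 2xz`. -/
def Aex : ℝ → ℝ → ℝ → ℝ :=
  fun x _y z => (z - 1) * Real.log |z - 1| - (z + 1) * Real.log |z + 1| - 2 * x * z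

lemma pZ_Aex (x y z : ℝ) (h1 : z ≠ 1) (h2 : z ≠ -1) :
    pZ Aex x y z = Real.log (z - 1) - Real.log (z + 1) - 2 * x := by
  have hz1 : z - 1 ≠ 0 := sub_ne_zero.mpr h1
  have hz2 : z + 1 ≠ 0 := by intro h; apply h2; linarith [h]
  have hd : HasDerivAt
      (fun t : ℝ => (t - 1) * Real.log (t - 1) - (t + 1) * Real.log (t + 1) - 2 * x * t)
      (Real.log (z - 1) - Real.log (z + 1) - 2 * x) z := by
    have hA : HasDerivAt (fun t : ℝ => t - 1) 1 z := (hasDerivAt_id z).sub_const 1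
    have hB : HasDerivAt (fun t : ℝ => t + 1) 1 z := (hasDerivAt_id z).add_const 1
    have hl1 : HasDerivAt (fun t : ℝ => Real.log (t - 1)) ((z - 1)⁻¹ * 1) z :=
      (Real.hasDerivAt_log hz1).comp (h := fun t : ℝ => t - 1) z hA
    have hl2 : HasDerivAt (fun t : ℝ => Real.log (t + 1)) ((z + 1)⁻¹ * 1) z :=
      (Real.hasDerivAt_log hz2).comp (h := fun t : ℝ => t + 1) z hB
    have := ((hA.mul hl1).sub (hB.mul hl2)).sub ((hasDerivAt_id z).const_mul (2 * x))
    refine this.congr_deriv ?_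
    simp only [one_mul, mul_one, mul_inv_cancel₀ hz1, mul_inv_cancel₀ hz2]
    ring
  unfold pZ
  have heq : (fun t => Aex x y t)
      = fun t : ℝ => (t - 1) * Real.log (t - 1) - (t + 1) * Real.log (t + 1) - 2 * x * t := by
    funext t; simp [Aex, Real.log_abs]
  rw [heq, hd.deriv]

/-- for `A(x,y,z) = (z−1)log|z−1| − (z+1)log|z+1| − 2xz` and `z ≠ ±1`,
the Rashevsky identity `A''·(z²−1) + z·A'_y + A'_x − A_y = 0` holds; the geodesic
equation is `y'' = y'² − 1`, whose right-hand side is a polynomial of degree ≤ 3. -/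
theorem stmt_7 :
    (∀ x y z : ℝ, z ≠ 1 → z ≠ -1 →
      pZ (pZ Aex) x y z * (z ^ 2 - 1) + z * pY (pZ Aex) x y z
        + pX (pZ Aex) x y z - pY Aex x y z = 0) ∧
    ∃ c₀ c₁ c₂ c₃ : ℝ, ∀ w : ℝ, w ^ 2 - 1 = c₀ + c₁ * w + c₂ * w ^ 2 + c₃ * w ^ 3 := by
  constructor
  · intro x y z h1 h2
    have hz1 : z - 1 ≠ 0 := sub_ne_zero.mpr h1
    have hz2 : z + 1 ≠ 0 := by intro h; apply h2; linarith [h]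
    -- second z-derivative
    have hAzz : pZ (pZ Aex) x y z = (z - 1)⁻¹ - (z + 1)⁻¹ := by
      have hev : (fun t => pZ Aex x y t)
          =ᶠ[nhds z] fun t : ℝ => Real.log (t - 1) - Real.log (t + 1) - 2 * x := by
        filter_upwards [eventually_ne_nhds h1, eventually_ne_nhds h2] with t ht1 ht2
        exact pZ_Aex x y t ht1 ht2
      have hd : HasDerivAt (fun t : ℝ => Real.log (t - 1) - Real.log (t + 1) - 2 * x)
          ((z - 1)⁻¹ - (z + 1)⁻¹) z := by
        have hl1 : HasDerivAt (fun t : ℝ => Real.log (t - 1)) ((z - 1)⁻¹ * 1) z :=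
          (Real.hasDerivAt_log hz1).comp (h := fun t : ℝ => t - 1) z ((hasDerivAt_id z).sub_const 1)
        have hl2 : HasDerivAt (fun t : ℝ => Real.log (t + 1)) ((z + 1)⁻¹ * 1) z :=
          (Real.hasDerivAt_log hz2).comp (h := fun t : ℝ => t + 1) z ((hasDerivAt_id z).add_const 1)
        simpa using (hl1.sub hl2).sub_const (2 * x)
      show deriv (fun t => pZ Aex x y t) z = _
      rw [hev.deriv_eq, hd.deriv]
    -- y-derivatives
    have hAzy : pY (pZ Aex) x y z = 0 := by
      have : (fun t => pZ Aex x t z) = fun _ : ℝ => pZ Aex x y z := by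
        funext t; rw [pZ_Aex x t z h1 h2, pZ_Aex x y z h1 h2]
      show deriv (fun t => pZ Aex x t z) y = 0
      rw [this, deriv_const]
    have hAy : pY Aex x y z = 0 := by
      show deriv (fun t => Aex x t z) y = 0
      simp [Aex]
    -- x-derivative of A'
    have hAzx : pX (pZ Aex) x y z = -2 := by
      have heq : (fun t => pZ Aex t y z)
          = fun t : ℝ => Real.log (z - 1) - Real.log (z + 1) - 2 * t := by
        funext t; rw [pZ_Aex t y z h1 h2]
      show deriv (fun t => pZ Aex t y z) x = -2
      rw [heq]
      have hd : HasDerivAt (fun t : ℝ => Real.log (z - 1) - Real.log (z + 1) - 2 * t) (-2) x := by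
        simpa using ((hasDerivAt_id x).const_mul (2:ℝ)).const_sub (Real.log (z - 1) - Real.log (z + 1))
      exact hd.deriv
    rw [hAzz, hAzy, hAy, hAzx]
    have hzz : z ^ 2 - 1 ≠ 0 := by
      intro h
      rcases mul_eq_zero.mp (by linarith [h] : (z - 1) * (z + 1) = 0) with h' | h'
      · exact hz1 h'
      · exact hz2 h'
    have : (z - 1)⁻¹ - (z + 1)⁻¹ = 2 / (z ^ 2 - 1) := by
      rw [eq_div_iff hzz]
      field_simp
      ring
    rw [this]
    rw [div_mul_cancel₀ _ hzz]
    ring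
  · exact ⟨-1, 0, 1, 0, fun w => by ring⟩
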